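/- (Lemma 5) Let x₀ : M and T ≥ 1 satisfy F^[T] x₀ = x₀ with the states F^[j] x₀ for j < T pairwise distinct, and suppose the periodic orbit χ = {F^[j] x₀ | j < T} is isolated: for every x ∉ χ, F x ∉ χ. Let k : ℕ and λ = exp(2 π i k / T). Then the observable c = ∑_{j < T} λ^j • b (F^[j] x₀) is a Koopman eigenfunction with eigenvalue λ: c ∘ F = λ • c. -/

import Mathlib

/-- The indicator observable `b q : M → ℂ`: `(b q) x = 1` if `x = q` and `0` otherwise. -/
def indicator {M : Type*} [DecidableEq M] (q : M) : M → ℂ :=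
  fun x => if x = q then 1 else 0

lemma orbit_sum_eq {M : Type*} [DecidableEq M] (F : M → M) (x₀ : M) (T : ℕ)
    (hdist : ∀ i < T, ∀ j < T, F^[i] x₀ = F^[j] x₀ → i = j)
    (lam : ℂ) (j : ℕ) (hj : j < T) (x : M) (hx : F^[j] x₀ = x) :
    ∑ i ∈ Finset.range T, lam ^ i * indicator (F^[i] x₀) x = lam ^ j := by
  rw [Finset.sum_eq_single j]
  · simp [indicator, hx]
  · intro i hi hij
    have : x ≠ F^[i] x₀ := by
      intro h
      exact hij (hdist i (Finset.mem_range.mp hi) j hj (h ▸ hx.symm ▸ rfl))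
    simp [indicator, this]
  · intro h; exact absurd (Finset.mem_range.mpr hj) h

lemma orbit_sum_zero {M : Type*} [DecidableEq M] (F : M → M) (x₀ : M) (T : ℕ)
    (lam : ℂ) (x : M) (hx : ¬ ∃ j < T, F^[j] x₀ = x) :
    ∑ i ∈ Finset.range T, lam ^ i * indicator (F^[i] x₀) x = 0 := by
  apply Finset.sum_eq_zero
  intro i hi
  have : x ≠ F^[i] x₀ := fun h => hx ⟨i, Finset.mem_range.mp hi, h.symm⟩
  simp [indicator, this]

/-- Lemma 5: given an isolated period-`T` orbit `χ = {F^[j] x₀ | j < T}`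
(with the `T` states pairwise distinct), for `λ = exp(2πik/T)` the observable
`c = ∑_{j < T} λ^j • b (F^[j] x₀)` is a Koopman eigenfunction with eigenvalue `λ`:
`c ∘ F = λ • c`. -/
theorem isolated_periodic_orbit_eigenfunction
    {M : Type*} [Fintype M] [Nonempty M] [DecidableEq M] (F : M → M)
    (x₀ : M) (T : ℕ) (hT : 1 ≤ T) (hper : F^[T] x₀ = x₀)
    (hdist : ∀ i < T, ∀ j < T, F^[i] x₀ = F^[j] x₀ → i = j)
    (hiso : ∀ x : M, x ∉ {y : M | ∃ j < T, F^[j] x₀ = y} →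
      F x ∉ {y : M | ∃ j < T, F^[j] x₀ = y})
    (k : ℕ) (lam : ℂ) (hlam : lam = Complex.exp (2 * Real.pi * Complex.I * k / T)) :
    (fun x => ∑ j ∈ Finset.range T, lam ^ j • indicator (F^[j] x₀) x) ∘ F
      = lam • fun x => ∑ j ∈ Finset.range T, lam ^ j • indicator (F^[j] x₀) x := by
  have hTc : (T : ℂ) ≠ 0 := Nat.cast_ne_zero.mpr (by omega)
  have hlamT : lam ^ T = 1 := by
    rw [hlam, ← Complex.exp_nat_mul]
    rw [show (T : ℂ) * (2 * Real.pi * Complex.I * k / T) = k * (2 * Real.pi * Complex.I) by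
      field_simp]
    rw [Complex.exp_nat_mul, Complex.exp_two_pi_mul_I, one_pow]
  funext x
  simp only [Function.comp_apply, Pi.smul_apply, smul_eq_mul]
  by_cases hx : ∃ j < T, F^[j] x₀ = x
  · obtain ⟨j, hj, hjx⟩ := hx
    have hFx : F^[(j+1) % T] x₀ = F x := by
      rcases Nat.lt_or_ge (j+1) T with h | h
      · rw [Nat.mod_eq_of_lt h, Function.iterate_succ_apply', hjx]
      · have hjT : j + 1 = T := by omega
        have : (j+1) % T = 0 := by rw [hjT]; simp
        rw [this]
        have : F^[j+1] x₀ = F x := by rw [Function.iterate_succ_apply', hjx]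
        rw [← this, hjT, hper]
        rfl
    rw [orbit_sum_eq F x₀ T hdist lam ((j+1) % T) (Nat.mod_lt _ (by omega)) _ hFx,
        orbit_sum_eq F x₀ T hdist lam j hj x hjx]
    rcases Nat.lt_or_ge (j+1) T with h | h
    · rw [Nat.mod_eq_of_lt h]; ring
    · have hjT : j + 1 = T := by omega
      have : (j+1) % T = 0 := by rw [hjT]; simp
      rw [this, pow_zero]
      calc (1 : ℂ) = lam ^ T := hlamT.symm
        _ = lam * lam ^ j := by rw [← hjT]; ring
  · have hFx : ¬ ∃ j < T, F^[j] x₀ = F x := hiso x hx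
    rw [orbit_sum_zero F x₀ T lam _ hFx, orbit_sum_zero F x₀ T lam x hx, mul_zero]
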